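/- Suppose v_ε ⇀ v weakly in L²(X)^d, ρ_ε^{1/2}v_ε ⇀ w weakly in L²(X)^d for some w, and ∫_X ρ_ε|v_ε|² dμ → ∫_X ρ|v|² dμ, where ρ_ε → ρ a.e. with uniform bounds 0 < c ≤ ρ_ε ≤ C. Then ρ_ε^{1/2}v_ε → ρ^{1/2}v strongly in L²(X)^d. -/

import Mathlib

open MeasureTheory Filter
open scoped RealInnerProductSpace ENNReal

section helpers
variable {X : Type*} [MeasurableSpace X] {μ : MeasureTheory.Measure X} {E : Type*}
  [NormedAddCommGroup E] [InnerProductSpace ℝ E]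

lemma aux_integrable_inner {f g : X → E} (hf : MemLp f 2 μ) (hg : MemLp g 2 μ) :
    Integrable (fun x => (inner ℝ (f x) (g x) : ℝ)) μ := by
  have h := MeasureTheory.L2.integrable_inner (𝕜 := ℝ) (hf.toLp f) (hg.toLp g)
  refine h.congr ?_
  filter_upwards [hf.coeFn_toLp, hg.coeFn_toLp] with x h1 h2
  rw [h1, h2]

lemma aux_integrable_sq {f : X → E} (hf : MemLp f 2 μ) :
    Integrable (fun x => ‖f x‖ ^ 2) μ :=
  (aux_integrable_inner hf hf).congr
    (Filter.Eventually.of_forall fun x => real_inner_self_eq_norm_sq (f x))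

lemma aux_norm_toLp_sq {f : X → E} (hf : MemLp f 2 μ) :
    ‖hf.toLp f‖ ^ 2 = ∫ x, ‖f x‖ ^ 2 ∂μ := by
  rw [← real_inner_self_eq_norm_sq, MeasureTheory.L2.inner_def]
  refine integral_congr_ae ?_
  filter_upwards [hf.coeFn_toLp] with x h1
  rw [h1, real_inner_self_eq_norm_sq]

lemma aux_norm_toLp {f : X → E} (hf : MemLp f 2 μ) :
    ‖hf.toLp f‖ = Real.sqrt (∫ x, ‖f x‖ ^ 2 ∂μ) := by
  rw [← aux_norm_toLp_sq hf, Real.sqrt_sq (norm_nonneg _)]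

lemma aux_cs {f g : X → E} (hf : MemLp f 2 μ) (hg : MemLp g 2 μ) :
    |∫ x, (inner ℝ (f x) (g x) : ℝ) ∂μ| ≤
      Real.sqrt (∫ x, ‖f x‖ ^ 2 ∂μ) * Real.sqrt (∫ x, ‖g x‖ ^ 2 ∂μ) := by
  have h1 : ∫ x, (inner ℝ (f x) (g x) : ℝ) ∂μ = ⟪hf.toLp f, hg.toLp g⟫ := by
    rw [MeasureTheory.L2.inner_def]
    refine integral_congr_ae ?_
    filter_upwards [hf.coeFn_toLp, hg.coeFn_toLp] with x h1 h2
    rw [h1, h2]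
  rw [h1, ← aux_norm_toLp hf, ← aux_norm_toLp hg]
  exact abs_real_inner_le_norm _ _

end helpers

theorem stmt_7 {X : Type*} [MeasurableSpace X] (μ : Measure X) [IsFiniteMeasure μ]
    {d : ℕ} (hd : 1 ≤ d)
    (c C : ℝ) (hc : 0 < c) (hcC : c ≤ C)
    (ρn : ℕ → X → ℝ) (ρ : X → ℝ)
    (hρnmeas : ∀ n, Measurable (ρn n)) (hρmeas : Measurable ρ)
    (hρnbd : ∀ n, ∀ᵐ x ∂μ, ρn n x ∈ Set.Icc c C)
    (hρbd : ∀ᵐ x ∂μ, ρ x ∈ Set.Icc c C)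
    (hae : ∀ᵐ x ∂μ, Tendsto (fun n => ρn n x) atTop (nhds (ρ x)))
    (v : ℕ → X → EuclideanSpace ℝ (Fin d)) (v₀ : X → EuclideanSpace ℝ (Fin d))
    (hv : ∀ n, MemLp (v n) 2 μ) (hv₀ : MemLp v₀ 2 μ)
    (hweak : ∀ g : X → EuclideanSpace ℝ (Fin d), MemLp g 2 μ →
      Tendsto (fun n => ∫ x, (inner ℝ (v n x) (g x) : ℝ) ∂μ) atTop
        (nhds (∫ x, (inner ℝ (v₀ x) (g x) : ℝ) ∂μ)))
    (w : X → EuclideanSpace ℝ (Fin d)) (hwL2 : MemLp w 2 μ)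
    (hweak' : ∀ g : X → EuclideanSpace ℝ (Fin d), MemLp g 2 μ →
      Tendsto (fun n => ∫ x, (inner ℝ (Real.sqrt (ρn n x) • v n x) (g x) : ℝ) ∂μ) atTop
        (nhds (∫ x, (inner ℝ (w x) (g x) : ℝ) ∂μ)))
    (hnorm : Tendsto (fun n => ∫ x, ρn n x * ‖v n x‖ ^ 2 ∂μ) atTop
      (nhds (∫ x, ρ x * ‖v₀ x‖ ^ 2 ∂μ))) :
    Tendsto
      (fun n => eLpNorm (fun x => Real.sqrt (ρn n x) • v n x - Real.sqrt (ρ x) • v₀ x) 2 μ)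
      atTop (nhds 0) := by
  have hC : (0:ℝ) ≤ C := le_trans hc.le hcC
  set u : ℕ → X → EuclideanSpace ℝ (Fin d) := fun n x => Real.sqrt (ρn n x) • v n x with hu_def
  set u₀ : X → EuclideanSpace ℝ (Fin d) := fun x => Real.sqrt (ρ x) • v₀ x with hu₀_def
  -- L∞ bounds on the square roots
  have hsn : ∀ n, MemLp (fun x => Real.sqrt (ρn n x)) ⊤ μ := fun n =>
    memLp_top_of_bound (hρnmeas n).sqrt.aestronglyMeasurable (Real.sqrt C)
      ((hρnbd n).mono fun x hx => by
        rw [Real.norm_eq_abs, abs_of_nonneg (Real.sqrt_nonneg _)]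
        exact Real.sqrt_le_sqrt hx.2)
  have hs₀ : MemLp (fun x => Real.sqrt (ρ x)) ⊤ μ :=
    memLp_top_of_bound hρmeas.sqrt.aestronglyMeasurable (Real.sqrt C)
      (hρbd.mono fun x hx => by
        rw [Real.norm_eq_abs, abs_of_nonneg (Real.sqrt_nonneg _)]
        exact Real.sqrt_le_sqrt hx.2)
  have hu : ∀ n, MemLp (u n) 2 μ := fun n => (hv n).smul (hsn n)
  have hu₀ : MemLp u₀ 2 μ := hv₀.smul hs₀
  set L : ℝ := ∫ x, ρ x * ‖v₀ x‖ ^ 2 ∂μ with hL_def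
  set A : ℕ → ℝ := fun n => ∫ x, ρn n x * ‖v n x‖ ^ 2 ∂μ with hA_def
  set B : ℕ → ℝ := fun n => ∫ x, (inner ℝ (u n x) (u₀ x) : ℝ) ∂μ with hB_def
  -- integrabilities
  have hρv : ∀ n, Integrable (fun x => ρn n x * ‖v n x‖ ^ 2) μ := fun n =>
    (aux_integrable_sq (hv n)).bdd_mul (hρnmeas n).aestronglyMeasurable
      ((hρnbd n).mono fun x hx => by
        rw [Real.norm_eq_abs, abs_of_nonneg (le_trans hc.le hx.1)]; exact hx.2)
  have hρv₀ : Integrable (fun x => ρ x * ‖v₀ x‖ ^ 2) μ :=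
    (aux_integrable_sq hv₀).bdd_mul hρmeas.aestronglyMeasurable
      (hρbd.mono fun x hx => by
        rw [Real.norm_eq_abs, abs_of_nonneg (le_trans hc.le hx.1)]; exact hx.2)
  -- test functions
  set g : ℕ → X → EuclideanSpace ℝ (Fin d) := fun n x => Real.sqrt (ρn n x) • u₀ x with hg_def
  set g₀ : X → EuclideanSpace ℝ (Fin d) := fun x => Real.sqrt (ρ x) • u₀ x with hg₀_def
  have hg : ∀ n, MemLp (g n) 2 μ := fun n => hu₀.smul (hsn n)
  have hg₀ : MemLp g₀ 2 μ := hu₀.smul hs₀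
  -- term 1 tendsto
  have hT1 : Tendsto (fun n => ∫ x, (inner ℝ (v n x) (g₀ x) : ℝ) ∂μ) atTop (nhds L) := by
    have h := hweak g₀ hg₀
    have he : (∫ x, (inner ℝ (v₀ x) (g₀ x) : ℝ) ∂μ) = L := by
      refine integral_congr_ae (hρbd.mono fun x hx => ?_)
      simp only [hg₀_def, hu₀_def, real_inner_smul_right, smul_smul]
      rw [Real.mul_self_sqrt (le_trans hc.le hx.1), real_inner_self_eq_norm_sq]
    rwa [he] at h
  -- ε n → 0
  have hptsq : ∀ n x, ‖g n x - g₀ x‖ ^ 2 =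
      (Real.sqrt (ρn n x) - Real.sqrt (ρ x)) ^ 2 * ‖u₀ x‖ ^ 2 := by
    intro n x
    rw [hg_def, hg₀_def]
    simp only
    rw [← sub_smul, norm_smul, Real.norm_eq_abs, mul_pow, sq_abs]
  set ε : ℕ → ℝ := fun n => ∫ x, ‖g n x - g₀ x‖ ^ 2 ∂μ with hε_def
  have hε : Tendsto ε atTop (nhds 0) := by
    have h0 : (0:ℝ) = ∫ x, (0:ℝ) ∂μ := by simp
    rw [hε_def, h0]
    refine tendsto_integral_of_dominated_convergence (fun x => 4 * C * ‖u₀ x‖ ^ 2)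
      (fun n => (((hg n).sub hg₀).aestronglyMeasurable.norm.aemeasurable.pow_const
        2).aestronglyMeasurable)
      (((aux_integrable_sq hu₀).const_mul (4 * C))) ?_ ?_
    · intro n
      filter_upwards [hρnbd n, hρbd] with x hx hx'
      rw [Real.norm_eq_abs, abs_of_nonneg (sq_nonneg _), hptsq n x]
      have hb : |Real.sqrt (ρn n x) - Real.sqrt (ρ x)| ≤ 2 * Real.sqrt C := by
        refine (abs_sub _ _).trans ?_
        rw [abs_of_nonneg (Real.sqrt_nonneg _), abs_of_nonneg (Real.sqrt_nonneg _), two_mul]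
        exact add_le_add (Real.sqrt_le_sqrt hx.2) (Real.sqrt_le_sqrt hx'.2)
      have hsq : (Real.sqrt (ρn n x) - Real.sqrt (ρ x)) ^ 2 ≤ 4 * C := by
        have := sq_le_sq' (neg_le_of_neg_le (by linarith [abs_le.mp hb])) (abs_le.mp hb).2
        calc (Real.sqrt (ρn n x) - Real.sqrt (ρ x)) ^ 2
            ≤ (2 * Real.sqrt C) ^ 2 := by
              rw [← sq_abs]; exact pow_le_pow_left₀ (abs_nonneg _) hb 2
          _ = 4 * C := by rw [mul_pow, Real.sq_sqrt hC]; norm_num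
      exact mul_le_mul_of_nonneg_right hsq (sq_nonneg _)
    · filter_upwards [hae] with x hx
      have hs : Tendsto (fun n => Real.sqrt (ρn n x)) atTop (nhds (Real.sqrt (ρ x))) :=
        (Real.continuous_sqrt.continuousAt.tendsto).comp hx
      have : Tendsto (fun n => (Real.sqrt (ρn n x) - Real.sqrt (ρ x)) ^ 2 * ‖u₀ x‖ ^ 2)
          atTop (nhds (((Real.sqrt (ρ x) - Real.sqrt (ρ x)) ^ 2) * ‖u₀ x‖ ^ 2)) :=
        (((hs.sub tendsto_const_nhds).pow 2).mul tendsto_const_nhds)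
      simp only [sub_self, ne_eq, OfNat.ofNat_ne_zero, not_false_eq_true, zero_pow,
        zero_mul] at this
      refine Tendsto.congr (fun n => (hptsq n x).symm) this
  -- eventual bound on ∫ ‖v n‖²
  have hvsq : ∀ n, Integrable (fun x => ‖v n x‖ ^ 2) μ := fun n => aux_integrable_sq (hv n)
  have hAv : ∀ n, c * ∫ x, ‖v n x‖ ^ 2 ∂μ ≤ A n := by
    intro n
    rw [← integral_const_mul]
    refine integral_mono_ae ((hvsq n).const_mul c) (hρv n) ?_
    filter_upwards [hρnbd n] with x hx
    exact mul_le_mul_of_nonneg_right hx.1 (sq_nonneg _)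
  have hA : Tendsto A atTop (nhds L) := hnorm
  have hAev : ∀ᶠ n in atTop, A n ≤ L + 1 := hA.eventually (eventually_le_nhds (lt_add_one L))
  set M : ℝ := (L + 1) / c with hM_def
  have hvbd : ∀ᶠ n in atTop, ∫ x, ‖v n x‖ ^ 2 ∂μ ≤ M := by
    filter_upwards [hAev] with n hn
    rw [hM_def, le_div_iff₀ hc, mul_comm]
    exact le_trans (hAv n) hn
  -- term 2 tendsto 0
  have hT2 : Tendsto (fun n => ∫ x, (inner ℝ (v n x) (g n x - g₀ x) : ℝ) ∂μ) atTop (nhds 0) := by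
    have hg' : Tendsto (fun n => Real.sqrt M * Real.sqrt (ε n)) atTop (nhds 0) := by
      have h := ((Real.continuous_sqrt.continuousAt (x := (0:ℝ))).tendsto).comp hε
      have h2 : Tendsto (fun n => Real.sqrt M * Real.sqrt (ε n)) atTop
          (nhds (Real.sqrt M * Real.sqrt 0)) := tendsto_const_nhds.mul h
      simpa using h2
    refine squeeze_zero_norm' ?_ hg'
    filter_upwards [hvbd] with n hn
    rw [Real.norm_eq_abs]
    refine (aux_cs (hv n) ((hg n).sub hg₀)).trans ?_
    exact mul_le_mul_of_nonneg_right (Real.sqrt_le_sqrt hn) (Real.sqrt_nonneg _)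
  -- B → L
  have hB : Tendsto B atTop (nhds L) := by
    have hBeq : ∀ n, B n = (∫ x, (inner ℝ (v n x) (g₀ x) : ℝ) ∂μ) +
        ∫ x, (inner ℝ (v n x) (g n x - g₀ x) : ℝ) ∂μ := by
      intro n
      have h1 : Integrable (fun x => (inner ℝ (v n x) (g₀ x) : ℝ)) μ :=
        aux_integrable_inner (hv n) hg₀
      have h2 : Integrable (fun x => (inner ℝ (v n x) (g n x - g₀ x) : ℝ)) μ :=
        aux_integrable_inner (hv n) ((hg n).sub hg₀)
      rw [← integral_add h1 h2]
      refine integral_congr_ae (Filter.Eventually.of_forall fun x => ?_)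
      simp only [hg_def, hg₀_def, hu_def, hu₀_def, inner_sub_right,
        real_inner_smul_left, real_inner_smul_right]
      ring
    have := hT1.add hT2
    rw [add_zero] at this
    exact Tendsto.congr (fun n => (hBeq n).symm) this
  -- expansion of the L² distance
  set I : ℕ → ℝ := fun n => ∫ x, ‖u n x - u₀ x‖ ^ 2 ∂μ with hI_def
  have hIeq : ∀ n, I n = A n - 2 * B n + L := by
    intro n
    have hptw : (fun x => ‖u n x - u₀ x‖ ^ 2) =ᵐ[μ]
        fun x => ρn n x * ‖v n x‖ ^ 2 - 2 * (inner ℝ (u n x) (u₀ x) : ℝ) + ρ x * ‖v₀ x‖ ^ 2 := by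
      filter_upwards [hρnbd n, hρbd] with x hx hx'
      rw [norm_sub_sq_real]
      congr 2
      · rw [hu_def]; simp only
        rw [norm_smul, Real.norm_eq_abs, abs_of_nonneg (Real.sqrt_nonneg _), mul_pow,
          Real.sq_sqrt (le_trans hc.le hx.1)]
      · rw [hu₀_def]; simp only
        rw [norm_smul, Real.norm_eq_abs, abs_of_nonneg (Real.sqrt_nonneg _), mul_pow,
          Real.sq_sqrt (le_trans hc.le hx'.1)]
    have h2 : Integrable (fun x => 2 * (inner ℝ (u n x) (u₀ x) : ℝ)) μ :=
      (aux_integrable_inner (hu n) hu₀).const_mul 2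
    have h12 : Integrable
        (fun x => ρn n x * ‖v n x‖ ^ 2 - 2 * (inner ℝ (u n x) (u₀ x) : ℝ)) μ :=
      (hρv n).sub h2
    rw [hI_def]
    simp only
    rw [integral_congr_ae hptw, integral_add h12 hρv₀,
      integral_sub (hρv n) h2, integral_const_mul]
  have hI : Tendsto I atTop (nhds 0) := by
    have h := (hA.sub (hB.const_mul 2)).add (tendsto_const_nhds (x := L))
    have : L - 2 * L + L = 0 := by ring
    rw [this] at h
    exact Tendsto.congr (fun n => (hIeq n).symm) h
  -- conclude
  have key : ∀ n, eLpNorm (fun x => u n x - u₀ x) 2 μ =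
      ENNReal.ofReal ((I n) ^ ((2:ℝ)⁻¹)) := by
    intro n
    have hsub : MemLp (fun x => u n x - u₀ x) 2 μ := (hu n).sub hu₀
    rw [hsub.eLpNorm_eq_integral_rpow_norm two_ne_zero ENNReal.ofNat_ne_top]
    congr 1
    have h2 : (2 : ℝ≥0∞).toReal = (2:ℝ) := by simp
    rw [h2]
    congr 1
    refine integral_congr_ae (Filter.Eventually.of_forall fun x => ?_)
    rw [show ((2:ℝ)) = ((2:ℕ):ℝ) by norm_num]
    exact Real.rpow_natCast _ 2
  have hfin : Tendsto (fun n => (I n) ^ ((2:ℝ)⁻¹)) atTop (nhds 0) := by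
    have h := (Real.continuousAt_rpow_const 0 (2:ℝ)⁻¹ (Or.inr (by norm_num))).tendsto.comp hI
    simpa [Function.comp_def, Real.zero_rpow (by norm_num : ((2:ℝ)⁻¹) ≠ 0)] using h
  have hfin2 := ENNReal.tendsto_ofReal hfin
  rw [ENNReal.ofReal_zero] at hfin2
  show Tendsto (fun n => eLpNorm (fun x => u n x - u₀ x) 2 μ) atTop (nhds 0)
  exact Tendsto.congr (fun n => (key n).symm) hfin2
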